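/- For M ∈ ℕ with M ≥ 2 and any X ≥ 1 and k ∈ ℕ, define the restricted divisor function τ_X(m) = #{q ≤ X : q divides m}. Then Σ_{m ≤ M} τ_X(m)^{2k} ≤ M · Σ_{l ≤ X^{2k}} τ(l)^{2k}/l, where τ is the usual divisor function. Consequently Σ_{m ≤ M} τ_X(m)^{2k} ≪_{ε,k} M X^ε. -/

import Mathlib

open Finset

section Aux

lemma aux_sumA {s : ℝ} (hs0 : 0 < s) (hs1 : s ≤ 1) (Y : ℕ) :
    ∑ l ∈ Finset.Icc 1 Y, (l : ℝ) ^ (s - 1) ≤ (Y : ℝ) ^ s / s := by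
  have key : ∀ l : ℕ, 1 ≤ l → s * (l : ℝ) ^ (s - 1) ≤ (l : ℝ) ^ s - ((l - 1 : ℕ) : ℝ) ^ s := by
    intro l hl
    have hl0 : (0 : ℝ) < l := by exact_mod_cast hl
    have hinv : 1 / (l : ℝ) ≤ 1 := by rw [div_le_one hl0]; exact_mod_cast hl
    have h1 : ((l - 1 : ℕ) : ℝ) = (l : ℝ) * (1 + -(1 / l)) := by
      rw [Nat.cast_sub hl]; field_simp; ring
    have hb : (1 + -(1 / (l : ℝ))) ^ s ≤ 1 + s * -(1 / l) :=
      rpow_one_add_le_one_add_mul_self (by linarith) hs0.le hs1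
    have hsplit : (((l - 1 : ℕ) : ℝ)) ^ s = (l : ℝ) ^ s * (1 + -(1 / l)) ^ s := by
      rw [h1, Real.mul_rpow hl0.le (by linarith)]
    have hpos : (0 : ℝ) ≤ (l : ℝ) ^ s := Real.rpow_nonneg hl0.le s
    have hmul := mul_le_mul_of_nonneg_left hb hpos
    have heq : s * (l : ℝ) ^ (s - 1) = (l : ℝ) ^ s * (s * (1 / l)) := by
      rw [Real.rpow_sub hl0, Real.rpow_one]; ring
    rw [heq, hsplit]; nlinarith [hmul]
  have tel : ∑ l ∈ Finset.Icc 1 Y, ((l : ℝ) ^ s - ((l - 1 : ℕ) : ℝ) ^ s) = (Y : ℝ) ^ s := by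
    have : Finset.Icc 1 Y = Finset.Ico 1 (Y + 1) := by rw [Nat.Icc_eq_range', Nat.Ico_eq_range']
    rw [this, Finset.sum_Ico_eq_sum_range]
    simp only [Nat.add_sub_cancel]
    have hc : ∀ i ∈ Finset.range Y, ((1 + i : ℕ) : ℝ) ^ s - ((1 + i - 1 : ℕ) : ℝ) ^ s
        = (fun j : ℕ => ((j : ℕ) : ℝ) ^ s) (i + 1) - (fun j : ℕ => ((j : ℕ) : ℝ) ^ s) i := by
      intro i _; simp [Nat.add_comm 1 i]
    rw [Finset.sum_congr rfl hc]
    have h2 := Finset.sum_range_sub (fun j : ℕ => ((j : ℕ) : ℝ) ^ s) Y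
    exact h2.trans (by simp [Real.zero_rpow hs0.ne'])
  rw [le_div_iff₀ hs0]
  calc (∑ l ∈ Finset.Icc 1 Y, (l:ℝ) ^ (s-1)) * s = ∑ l ∈ Finset.Icc 1 Y, s * (l:ℝ) ^ (s-1) := by
        rw [Finset.sum_mul]; exact Finset.sum_congr rfl fun _ _ => mul_comm _ _
    _ ≤ ∑ l ∈ Finset.Icc 1 Y, ((l : ℝ) ^ s - ((l - 1 : ℕ) : ℝ) ^ s) :=
        Finset.sum_le_sum fun l hl => key l (Finset.mem_Icc.mp hl).1
    _ = (Y : ℝ) ^ s := tel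


lemma aux_factorBound {δ : ℝ} (hδ : 0 < δ) (p a : ℕ) (hp : 2 ≤ p) :
    ((a + 1 : ℕ) : ℝ) ≤ (if (p:ℝ)^δ < 2 then (1 + 2/(δ * Real.log 2)) else 1)
      * (((p ^ a : ℕ) : ℝ)) ^ δ := by
  have hlog : 0 < Real.log 2 := Real.log_pos (by norm_num)
  have hp0 : (0:ℝ) ≤ (p:ℝ) := by positivity
  have hcast : (((p ^ a : ℕ) : ℝ)) ^ δ = ((p:ℝ)^δ) ^ a := by
    push_cast
    rw [← Real.rpow_natCast ((p:ℝ)^δ) a, ← Real.rpow_natCast (p:ℝ) a,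
      ← Real.rpow_mul hp0, ← Real.rpow_mul hp0, mul_comm]
  rw [hcast]
  split_ifs with hsmall
  · -- small prime: ((p:ℝ)^δ)^a ≥ 2^(aδ) = exp(a δ log 2)
    have h2 : (2:ℝ)^(δ * a) ≤ ((p:ℝ)^δ)^a := by
      rw [← Real.rpow_natCast ((p:ℝ)^δ) a, ← Real.rpow_mul hp0]
      exact Real.rpow_le_rpow (by norm_num) (by exact_mod_cast hp) (by positivity)
    have hexp : (2:ℝ)^(δ * a) = Real.exp (δ * a * Real.log 2) := by
      rw [Real.rpow_def_of_pos (by norm_num), mul_comm (Real.log 2)]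
    have hge : δ * a * Real.log 2 ≤ (2:ℝ)^(δ * (a:ℝ)) := by
      rw [hexp]
      linarith [Real.add_one_le_exp (δ * a * Real.log 2)]
    have hge1 : (1:ℝ) ≤ (2:ℝ)^(δ * (a:ℝ)) := by
      apply Real.one_le_rpow (by norm_num) (by positivity)
    set B := 1 + 2/(δ * Real.log 2) with hB
    have hBge : (2:ℝ)/(δ * Real.log 2) ≤ B := by simp [hB]
    have hB1 : (1:ℝ) ≤ B := by
      have : 0 < 2/(δ * Real.log 2) := by positivity
      simp [hB]; linarith
    rcases Nat.eq_zero_or_pos a with rfl | ha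
    · simpa using le_trans hB1 (by nlinarith [h2, hge1] : B ≤ B * ((p:ℝ)^δ)^(0:ℕ) )
    · have ha1 : (1:ℝ) ≤ (a:ℝ) := by exact_mod_cast ha
      have key : ((a + 1 : ℕ) : ℝ) ≤ B * (2:ℝ)^(δ * (a:ℝ)) := by
        calc ((a + 1 : ℕ) : ℝ) = (a:ℝ) + 1 := by push_cast; ring
          _ ≤ 2 * a := by linarith
          _ = (2/(δ * Real.log 2)) * (δ * a * Real.log 2) := by field_simp
          _ ≤ B * (2:ℝ)^(δ * (a:ℝ)) :=
              mul_le_mul hBge hge (by positivity) (by linarith)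
      exact key.trans (by nlinarith [h2, hge1, hB1])
  · -- large prime: a+1 ≤ 2^a ≤ (p^δ)^a
    push_neg at hsmall
    have h1 : ((a + 1 : ℕ) : ℝ) ≤ (2:ℝ)^a := by
      exact_mod_cast Nat.cast_le.mpr (Nat.lt_two_pow_self (n := a))
    have h2 : (2:ℝ)^a ≤ ((p:ℝ)^δ)^a := pow_le_pow_left₀ (by norm_num) hsmall a
    rw [one_mul]; linarith

lemma aux_divB {δ : ℝ} (hδ : 0 < δ) : ∃ C : ℝ, 1 ≤ C ∧ ∀ n : ℕ, n ≠ 0 →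
    ((n.divisors.card : ℕ) : ℝ) ≤ C * (n : ℝ) ^ δ := by
  have hlog : 0 < Real.log 2 := Real.log_pos (by norm_num)
  set B : ℝ := 1 + 2/(δ * Real.log 2) with hBdef
  have hB1 : (1:ℝ) ≤ B := by
    have : 0 < 2/(δ * Real.log 2) := by positivity
    simp only [hBdef]; linarith
  set K : ℕ := ⌈(2:ℝ) ^ (1/δ)⌉₊ with hKdef
  refine ⟨B ^ K, one_le_pow₀ hB1, ?_⟩
  intro n hn
  rw [Nat.card_divisors hn]
  -- n as product over primeFactors
  have hnprod : (n : ℝ) = ∏ p ∈ n.primeFactors, ((p ^ n.factorization p : ℕ) : ℝ) := by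
    rw [← Nat.cast_prod]
    congr 1
    conv_lhs => rw [← Nat.factorization_prod_pow_eq_self hn]
    rfl
  have hrpow : (n : ℝ) ^ δ = ∏ p ∈ n.primeFactors, (((p ^ n.factorization p : ℕ) : ℝ)) ^ δ := by
    rw [hnprod, Real.finset_prod_rpow _ _ (fun i _ => by positivity)]
  push_cast
  calc (∏ p ∈ n.primeFactors, ((n.factorization p : ℝ) + 1))
      ≤ ∏ p ∈ n.primeFactors,
          ((if (p:ℝ)^δ < 2 then B else 1) * (((p ^ n.factorization p : ℕ) : ℝ)) ^ δ) := by
        apply Finset.prod_le_prod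
        · intro p _; positivity
        · intro p hp
          have h2p : 2 ≤ p := (Nat.prime_of_mem_primeFactors hp).two_le
          exact_mod_cast aux_factorBound hδ p (n.factorization p) h2p
    _ = (∏ p ∈ n.primeFactors, (if (p:ℝ)^δ < 2 then B else 1))
        * ∏ p ∈ n.primeFactors, (((p ^ n.factorization p : ℕ) : ℝ)) ^ δ :=
        Finset.prod_mul_distrib
    _ ≤ B ^ K * (n : ℝ) ^ δ := by
        rw [hrpow]
        apply mul_le_mul_of_nonneg_right _ (Finset.prod_nonneg fun i _ => by positivity)
        rw [Finset.prod_ite, Finset.prod_const, Finset.prod_const_one, mul_one]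
        have hsub : n.primeFactors.filter (fun p : ℕ => (p:ℝ)^δ < 2) ⊆ Finset.range K := by
          intro p hp
          rw [Finset.mem_filter] at hp
          rw [Finset.mem_range]
          have hp0 : (0:ℝ) ≤ (p:ℝ) := by positivity
          have hlt : (p:ℝ) < (2:ℝ) ^ (1/δ) := by
            have := Real.rpow_lt_rpow (by positivity) hp.2 (by positivity : (0:ℝ) < 1/δ)
            rwa [← Real.rpow_mul hp0, mul_one_div_cancel hδ.ne', Real.rpow_one] at this
          have : (p:ℝ) < (K:ℝ) := lt_of_lt_of_le hlt (Nat.le_ceil _)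
          exact_mod_cast this
        calc B ^ (n.primeFactors.filter (fun p : ℕ => (p:ℝ)^δ < 2)).card
            ≤ B ^ K := by
              apply pow_le_pow_right₀ hB1
              calc _ ≤ (Finset.range K).card := Finset.card_le_card hsub
                _ = K := Finset.card_range K

lemma aux_part1 (M X n : ℕ) (hX : 1 ≤ X) (hn : 1 ≤ n) :
    (∑ m ∈ Finset.Icc 1 M,
        (((Finset.Icc 1 X).filter (fun q => q ∣ m)).card : ℝ) ^ n) ≤
      (M : ℝ) * ∑ l ∈ Finset.Icc 1 (X ^ n),
        ((l.divisors.card : ℝ) ^ n) / l := by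
  classical
  set Q : Finset (Fin n → ℕ) := Fintype.piFinset (fun _ => Finset.Icc 1 X) with hQ
  set L : (Fin n → ℕ) → ℕ := fun q => Finset.univ.lcm q with hL
  -- basic facts about q ∈ Q
  have hmem : ∀ q ∈ Q, ∀ i, q i ∈ Finset.Icc 1 X := by
    intro q hq i; exact Fintype.mem_piFinset.mp hq i
  have hLdvd : ∀ q ∈ Q, L q ∣ ∏ i, q i :=
    fun q _ => Finset.lcm_dvd fun i _ => Finset.dvd_prod_of_mem q (Finset.mem_univ i)
  have hprodpos : ∀ q ∈ Q, 0 < ∏ i, q i := by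
    intro q hq
    exact Finset.prod_pos fun i _ => (Finset.mem_Icc.mp (hmem q hq i)).1
  have hLpos : ∀ q ∈ Q, 1 ≤ L q := by
    intro q hq
    rcases Nat.eq_zero_or_pos (L q) with h0 | h
    · exfalso
      have := hLdvd q hq
      rw [h0] at this
      exact (hprodpos q hq).ne' (Nat.eq_zero_of_zero_dvd this)
    · exact h
  have hLle : ∀ q ∈ Q, L q ≤ X ^ n := by
    intro q hq
    calc L q ≤ ∏ i, q i := Nat.le_of_dvd (hprodpos q hq) (hLdvd q hq)
      _ ≤ ∏ _i : Fin n, X := Finset.prod_le_prod' fun i _ => (Finset.mem_Icc.mp (hmem q hq i)).2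
      _ = X ^ n := by simp
  have hmaps : ∀ q ∈ Q, L q ∈ Finset.Icc 1 (X ^ n) :=
    fun q hq => Finset.mem_Icc.mpr ⟨hLpos q hq, hLle q hq⟩
  -- step 1: rewrite LHS as a double count (in ℕ)
  have step1 : (∑ m ∈ Finset.Icc 1 M, ((Finset.Icc 1 X).filter (fun q => q ∣ m)).card ^ n)
      = ∑ q ∈ Q, ((Finset.Icc 1 M).filter (fun m => ∀ i, q i ∣ m)).card := by
    have h1 : ∀ m : ℕ, ((Finset.Icc 1 X).filter (fun q => q ∣ m)).card ^ n
        = (Q.filter (fun q => ∀ i, q i ∣ m)).card := by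
      intro m
      rw [← Fintype.card_piFinset_const]
      congr 1
      ext q
      simp only [Fintype.mem_piFinset, Finset.mem_filter, hQ]
      exact forall_and
    simp_rw [h1, Finset.card_filter]
    rw [Finset.sum_comm]
  -- step 2: each fiber count is M / L q
  have step2 : ∀ q ∈ Q, ((Finset.Icc 1 M).filter (fun m => ∀ i, q i ∣ m)).card = M / L q := by
    intro q hq
    rw [← Nat.Ioc_filter_dvd_card_eq_div M (L q)]
    congr 1
    rw [← Finset.Icc_add_one_left_eq_Ioc 0 M]
    apply Finset.filter_congr
    intro m _
    simp only [hL, eq_iff_iff]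
    constructor
    · intro h; exact Finset.lcm_dvd fun i _ => h i
    · intro h i; exact (Finset.dvd_lcm (Finset.mem_univ i)).trans h
  -- fiber cardinality bound
  have fib : ∀ l ∈ Finset.Icc 1 (X ^ n),
      ((Q.filter (fun q => L q = l)).card : ℝ) ≤ ((l.divisors.card : ℝ)) ^ n := by
    intro l hl
    have hl1 : 1 ≤ l := (Finset.mem_Icc.mp hl).1
    have hsub : Q.filter (fun q => L q = l) ⊆ Fintype.piFinset (fun _ : Fin n => l.divisors) := by
      intro q hq
      rw [Finset.mem_filter] at hq
      rw [Fintype.mem_piFinset]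
      intro i
      rw [Nat.mem_divisors]
      have hql : L q = l := hq.2
      refine ⟨?_, Nat.one_le_iff_ne_zero.mp hl1⟩
      subst hql
      exact Finset.dvd_lcm (Finset.mem_univ i)
    calc ((Q.filter (fun q => L q = l)).card : ℝ)
        ≤ ((Fintype.piFinset (fun _ : Fin n => l.divisors)).card : ℝ) := by
          exact_mod_cast Finset.card_le_card hsub
      _ = ((l.divisors.card : ℝ)) ^ n := by rw [Fintype.card_piFinset_const]; push_cast; rfl
  -- main chain
  calc (∑ m ∈ Finset.Icc 1 M, (((Finset.Icc 1 X).filter (fun q => q ∣ m)).card : ℝ) ^ n)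
      = ((∑ m ∈ Finset.Icc 1 M, ((Finset.Icc 1 X).filter (fun q => q ∣ m)).card ^ n : ℕ) : ℝ) := by
        push_cast; rfl
    _ = ((∑ q ∈ Q, M / L q : ℕ) : ℝ) := by
        rw [step1]; congr 1; exact Finset.sum_congr rfl step2
    _ = ∑ q ∈ Q, ((M / L q : ℕ) : ℝ) := Nat.cast_sum _ _
    _ ≤ ∑ q ∈ Q, (M : ℝ) / (L q : ℝ) := Finset.sum_le_sum fun q _ => Nat.cast_div_le
    _ = ∑ l ∈ Finset.Icc 1 (X ^ n), ∑ q ∈ Q.filter (fun q => L q = l), (M : ℝ) / (L q : ℝ) :=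
        (Finset.sum_fiberwise_of_maps_to hmaps _).symm
    _ = ∑ l ∈ Finset.Icc 1 (X ^ n), ((Q.filter (fun q => L q = l)).card : ℝ) * ((M : ℝ) / l) := by
        apply Finset.sum_congr rfl
        intro l _
        have hcg : ∀ q ∈ Q.filter (fun q => L q = l), (M : ℝ) / (L q : ℝ) = (M : ℝ) / l := by
          intro q hq; rw [(Finset.mem_filter.mp hq).2]
        rw [Finset.sum_congr rfl hcg, Finset.sum_const, nsmul_eq_mul]
    _ ≤ ∑ l ∈ Finset.Icc 1 (X ^ n), ((l.divisors.card : ℝ)) ^ n * ((M : ℝ) / l) := by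
        apply Finset.sum_le_sum
        intro l hl
        exact mul_le_mul_of_nonneg_right (fib l hl) (by positivity)
    _ = (M : ℝ) * ∑ l ∈ Finset.Icc 1 (X ^ n), ((l.divisors.card : ℝ)) ^ n / l := by
        rw [Finset.mul_sum]
        exact Finset.sum_congr rfl fun l _ => by ring

theorem aux_stmt_4 (ε : ℝ) (hε : 0 < ε) (k : ℕ) (hk : 1 ≤ k)
    (aux_part1 : ∀ (M X n : ℕ), 1 ≤ X → 1 ≤ n →
      (∑ m ∈ Finset.Icc 1 M,
        (((Finset.Icc 1 X).filter (fun q => q ∣ m)).card : ℝ) ^ n) ≤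
      (M : ℝ) * ∑ l ∈ Finset.Icc 1 (X ^ n), ((l.divisors.card : ℝ) ^ n) / l)
    (aux_sumA : ∀ {s : ℝ}, 0 < s → s ≤ 1 → ∀ Y : ℕ,
      ∑ l ∈ Finset.Icc 1 Y, (l : ℝ) ^ (s - 1) ≤ (Y : ℝ) ^ s / s)
    (aux_divB : ∀ {δ : ℝ}, 0 < δ → ∃ C : ℝ, 1 ≤ C ∧ ∀ n : ℕ, n ≠ 0 →
      ((n.divisors.card : ℕ) : ℝ) ≤ C * (n : ℝ) ^ δ) :
    ∃ D : ℝ, 0 < D ∧ ∀ M X : ℕ, 2 ≤ M → 1 ≤ X →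
      (∑ m ∈ Finset.Icc 1 M,
          (((Finset.Icc 1 X).filter (fun q => q ∣ m)).card : ℝ) ^ (2 * k) ≤
        (M : ℝ) * ∑ l ∈ Finset.Icc 1 (X ^ (2 * k)),
          ((l.divisors.card : ℝ) ^ (2 * k)) / l) ∧
      ∑ m ∈ Finset.Icc 1 M,
          (((Finset.Icc 1 X).filter (fun q => q ∣ m)).card : ℝ) ^ (2 * k) ≤
        D * M * (X : ℝ) ^ ε := by
  have hk0 : (0:ℝ) < (2 * k : ℕ) := by positivity
  set ε' : ℝ := min ε 1 with hε'def
  have hε'0 : 0 < ε' := lt_min hε one_pos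
  have hε'1 : ε' ≤ 1 := min_le_right _ _
  have hε'ε : ε' ≤ ε := min_le_left _ _
  set s : ℝ := ε' / (2 * k : ℕ) with hsdef
  have hs0 : 0 < s := by positivity
  have hs1 : s ≤ 1 := by
    rw [hsdef, div_le_one hk0]
    have : (1:ℝ) ≤ (2 * k : ℕ) := by exact_mod_cast Nat.one_le_iff_ne_zero.mpr (by omega)
    linarith
  set δ : ℝ := s / (2 * k : ℕ) with hδdef
  have hδ0 : 0 < δ := by positivity
  obtain ⟨C, hC1, hC⟩ := aux_divB hδ0
  have hC0 : (0:ℝ) < C := lt_of_lt_of_le one_pos hC1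
  refine ⟨C ^ (2 * k) / s, by positivity, ?_⟩
  intro M X hM hX
  have h1 := aux_part1 M X (2 * k) hX (by omega)
  refine ⟨h1, h1.trans ?_⟩
  have hX0 : (0:ℝ) ≤ (X:ℝ) := by positivity
  have hX1 : (1:ℝ) ≤ (X:ℝ) := by exact_mod_cast hX
  -- bound the sum over l
  have hterm : ∀ l ∈ Finset.Icc 1 (X ^ (2 * k)),
      ((l.divisors.card : ℝ) ^ (2 * k)) / l ≤ C ^ (2 * k) * (l : ℝ) ^ (s - 1) := by
    intro l hl
    have hl1 : 1 ≤ l := (Finset.mem_Icc.mp hl).1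
    have hl0 : (0:ℝ) < l := by exact_mod_cast hl1
    have hd := hC l (by omega)
    have hpow : ((l.divisors.card : ℝ)) ^ (2 * k) ≤ (C * (l:ℝ) ^ δ) ^ (2 * k) :=
      pow_le_pow_left₀ (by positivity) hd _
    have hrw : (C * (l:ℝ) ^ δ) ^ (2 * k) = C ^ (2 * k) * (l:ℝ) ^ s := by
      rw [mul_pow, ← Real.rpow_natCast ((l:ℝ) ^ δ) (2*k), ← Real.rpow_mul hl0.le, hδdef]
      congr 2
      field_simp
    calc ((l.divisors.card : ℝ) ^ (2 * k)) / l ≤ (C ^ (2 * k) * (l:ℝ) ^ s) / l := by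
          rw [← hrw]; exact div_le_div_of_nonneg_right hpow hl0.le
      _ = C ^ (2 * k) * (l : ℝ) ^ (s - 1) := by
          rw [Real.rpow_sub hl0, Real.rpow_one]; ring
  have hsum : ∑ l ∈ Finset.Icc 1 (X ^ (2 * k)), ((l.divisors.card : ℝ) ^ (2 * k)) / l
      ≤ C ^ (2 * k) * (((X ^ (2 * k) : ℕ) : ℝ) ^ s / s) := by
    calc ∑ l ∈ Finset.Icc 1 (X ^ (2 * k)), ((l.divisors.card : ℝ) ^ (2 * k)) / l
        ≤ ∑ l ∈ Finset.Icc 1 (X ^ (2 * k)), C ^ (2 * k) * (l : ℝ) ^ (s - 1) :=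
          Finset.sum_le_sum hterm
      _ = C ^ (2 * k) * ∑ l ∈ Finset.Icc 1 (X ^ (2 * k)), (l : ℝ) ^ (s - 1) := by
          rw [Finset.mul_sum]
      _ ≤ C ^ (2 * k) * (((X ^ (2 * k) : ℕ) : ℝ) ^ s / s) := by
          apply mul_le_mul_of_nonneg_left (aux_sumA hs0 hs1 (X ^ (2 * k)))
          positivity
  have hXs : ((X ^ (2 * k) : ℕ) : ℝ) ^ s ≤ (X : ℝ) ^ ε := by
    have h1 : ((X ^ (2 * k) : ℕ) : ℝ) ^ s = (X : ℝ) ^ ((2 * k : ℕ) * s) := by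
      push_cast
      rw [← Real.rpow_natCast (X:ℝ) (2*k), ← Real.rpow_mul hX0]
      push_cast
      ring_nf
    rw [h1]
    apply Real.rpow_le_rpow_of_exponent_le hX1
    rw [hsdef]
    calc (2 * k : ℕ) * (ε' / (2 * k : ℕ)) = ε' := by field_simp
      _ ≤ ε := hε'ε
  calc (M : ℝ) * ∑ l ∈ Finset.Icc 1 (X ^ (2 * k)), ((l.divisors.card : ℝ) ^ (2 * k)) / l
      ≤ (M : ℝ) * (C ^ (2 * k) * (((X ^ (2 * k) : ℕ) : ℝ) ^ s / s)) :=
        mul_le_mul_of_nonneg_left hsum (by positivity)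
    _ ≤ (M : ℝ) * (C ^ (2 * k) * ((X : ℝ) ^ ε / s)) := by
        apply mul_le_mul_of_nonneg_left _ (by positivity)
        apply mul_le_mul_of_nonneg_left _ (by positivity)
        exact div_le_div_of_nonneg_right hXs hs0.le
    _ = C ^ (2 * k) / s * M * (X : ℝ) ^ ε := by ring

end Aux

theorem stmt_4 (ε : ℝ) (hε : 0 < ε) (k : ℕ) (hk : 1 ≤ k) :
    ∃ D : ℝ, 0 < D ∧ ∀ M X : ℕ, 2 ≤ M → 1 ≤ X →
      (∑ m ∈ Finset.Icc 1 M,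
          (((Finset.Icc 1 X).filter (fun q => q ∣ m)).card : ℝ) ^ (2 * k) ≤
        (M : ℝ) * ∑ l ∈ Finset.Icc 1 (X ^ (2 * k)),
          ((l.divisors.card : ℝ) ^ (2 * k)) / l) ∧
      ∑ m ∈ Finset.Icc 1 M,
          (((Finset.Icc 1 X).filter (fun q => q ∣ m)).card : ℝ) ^ (2 * k) ≤
        D * M * (X : ℝ) ^ ε := by
  exact aux_stmt_4 ε hε k hk (fun M X n hX hn => aux_part1 M X n hX hn)
    (fun {s} hs0 hs1 Y => aux_sumA hs0 hs1 Y) (fun {δ} hδ => aux_divB hδ)
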